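/- arXiv:1312.5799 — 7 statements merged into one kernel-verified Lean document; each statement's English description precedes it below -/
import Mathlib

section
/- The sequence defined by θ₀ = τ/n and θ_{k+1} = (√(θ_k⁴ + 4θ_k²) − θ_k²)/2 satisfies θ_k ≤ 2/(k + 2n/τ) for all k ≥ 0. -/
theorem theta_upper_bound (n τ : ℝ) (hn : 0 < n) (hτ : 0 < τ) (hτn : τ ≤ n)
    (θ : ℕ → ℝ) (h0 : θ 0 = τ / n)
    (hrec : ∀ k, θ (k + 1) = (Real.sqrt ((θ k) ^ 4 + 4 * (θ k) ^ 2) - (θ k) ^ 2) / 2) :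
    ∀ k : ℕ, θ k ≤ 2 / ((k : ℝ) + 2 * n / τ) := by
  have ht2 : (2:ℝ) ≤ 2 * n / τ := by
    rw [le_div_iff₀ hτ]; nlinarith
  have key : ∀ k : ℕ, 0 ≤ θ k ∧ θ k ≤ 2 / ((k : ℝ) + 2 * n / τ) := by
    intro k
    induction k with
    | zero =>
      constructor
      · rw [h0]; positivity
      · rw [h0]
        push_cast
        rw [div_le_div_iff₀ hn (by linarith)]
        have hτne : τ ≠ 0 := ne_of_gt hτ
        have : τ * (2 * n / τ) = 2 * n := by field_simp
        nlinarith
    | succ k ih =>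
      obtain ⟨ha0, ha⟩ := ih
      set a := θ k with hadef
      set t : ℝ := (k : ℝ) + 2 * n / τ with htdef
      have ht : (2:ℝ) ≤ t := by
        have : (0:ℝ) ≤ (k:ℝ) := Nat.cast_nonneg k
        simp only [htdef]; linarith
      have htpos : (0:ℝ) < t := by linarith
      have hc : (0:ℝ) < 2 / (t + 1) := by positivity
      set c : ℝ := 2 / (t + 1) with hcdef
      have hcu : c * (t + 1) = 2 := by rw [hcdef]; field_simp
      have hc1 : c < 1 := by
        rw [hcdef, div_lt_one (by linarith)]; linarith
      have hat : a * t ≤ 2 := by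
        rw [div_eq_mul_inv] at ha
        calc a * t ≤ (2 * t⁻¹) * t := by
              apply mul_le_mul_of_nonneg_right ha (le_of_lt htpos)
          _ = 2 := by field_simp
      have hat2 : a ^ 2 * t ^ 2 ≤ 4 := by nlinarith [hat, mul_nonneg ha0 htpos.le]
      have hstep : a ^ 2 * (t - 1) * (t + 1) ≤ 4 := by nlinarith [sq_nonneg a]
      have h1 : a ^ 2 * (1 - c) ≤ c ^ 2 := by
        nlinarith [hstep, hcu, sq_nonneg a, mul_pos htpos htpos,
          mul_nonneg (sq_nonneg a) (le_of_lt hc)]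
      have hkey : a ^ 4 + 4 * a ^ 2 ≤ (2 * c + a ^ 2) ^ 2 := by nlinarith
      have hsqrt : Real.sqrt (a ^ 4 + 4 * a ^ 2) ≤ 2 * c + a ^ 2 := by
        have := Real.sqrt_le_sqrt hkey
        rwa [Real.sqrt_sq (by positivity)] at this
      have hsqrt0 : a ^ 2 ≤ Real.sqrt (a ^ 4 + 4 * a ^ 2) := by
        have h : a ^ 2 = Real.sqrt ((a ^ 2) ^ 2) := (Real.sqrt_sq (by positivity)).symm
        rw [h]
        apply Real.sqrt_le_sqrt
        nlinarith
      constructor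
      · rw [hrec k]; linarith
      · rw [hrec k]
        have hcast : ((k + 1 : ℕ) : ℝ) + 2 * n / τ = t + 1 := by
          push_cast; rw [htdef]; ring
        rw [hcast]
        linarith
  exact fun k => (key k).2
end

section
/- If a sequence θ_k in (0,1] satisfies (1 − θ_{k+1})/θ_{k+1}² = 1/θ_k², and sequences x_k, y_k, z_k in a vector space satisfy y_k = (1−θ_k) x_k + θ_k z_k and x_{k+1} = y_k + (n/τ)θ_k (z_{k+1} − z_k) with θ₀ = τ/n and x₀ = z₀, then for every k, x_k is a convex combination of z₀, …, z_k; specifically x_k = Σ_{l=0}^k γ_k^l z_l where γ₀⁰=1, γ₁⁰=0, γ₁¹=1, and for k ≥ 1: γ_{k+1}^l = (1−θ_k)γ_k^l for l ≤ k−1, γ_{k+1}^k = θ_k(1 − (n/τ)θ_{k−1}) + (n/τ)(θ_{k−1} − θ_k), γ_{k+1}^{k+1} = (n/τ)θ_k, with all γ_k^l ≥ 0 and Σ_{l=0}^k γ_k^l = 1. -/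
theorem x_convex_combination_of_z (n τ : ℝ) (hn : 0 < n) (hτ : 0 < τ) (hτn : τ ≤ n)
    (N : ℕ) (θ : ℕ → ℝ) (hθpos : ∀ k, 0 < θ k) (hθle1 : ∀ k, θ k ≤ 1)
    (hθ0 : θ 0 = τ / n)
    (hθid : ∀ k, (1 - θ (k + 1)) / (θ (k + 1)) ^ 2 = 1 / (θ k) ^ 2)
    (x y z : ℕ → (Fin N → ℝ))
    (hx0 : x 0 = z 0)
    (hy : ∀ k, y k = (1 - θ k) • x k + θ k • z k)
    (hx : ∀ k, x (k + 1) = y k + ((n / τ) * θ k) • (z (k + 1) - z k))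
    (γ : ℕ → ℕ → ℝ)
    (hγ00 : γ 0 0 = 1) (hγ10 : γ 1 0 = 0) (hγ11 : γ 1 1 = 1)
    (hγrec : ∀ j : ℕ, ∀ l ≤ j,
      γ (j + 2) l = (1 - θ (j + 1)) * γ (j + 1) l)
    (hγk : ∀ j : ℕ,
      γ (j + 2) (j + 1) = θ (j + 1) * (1 - (n / τ) * θ j) + (n / τ) * (θ j - θ (j + 1)))
    (hγtop : ∀ j : ℕ, γ (j + 2) (j + 2) = (n / τ) * θ (j + 1)) :
    ∀ k : ℕ, (∀ l ≤ k, 0 ≤ γ k l) ∧ (∑ l ∈ Finset.range (k + 1), γ k l = 1) ∧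
      x k = ∑ l ∈ Finset.range (k + 1), γ k l • z l := by
  have hmono : ∀ k, θ (k + 1) ≤ θ k := by
    intro k
    have h1 := hθid k
    have hk := hθpos k
    have hk1 := hθpos (k + 1)
    have h2 : (1 - θ (k + 1)) * (θ k) ^ 2 = (θ (k + 1)) ^ 2 := by
      field_simp at h1
      nlinarith [h1]
    nlinarith [hθle1 (k + 1), sq_nonneg (θ k), sq_nonneg (θ (k + 1))]
  have hnτ : 0 < n / τ := div_pos hn hτ
  have hle : ∀ k, θ k ≤ τ / n := by
    intro k
    induction k with
    | zero => rw [hθ0]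
    | succ k ih => exact le_trans (hmono k) ih
  have hcθ : ∀ k, (n / τ) * θ k ≤ 1 := by
    intro k
    have h2 : (n / τ) * θ k ≤ (n / τ) * (τ / n) :=
      mul_le_mul_of_nonneg_left (hle k) (le_of_lt hnτ)
    have h3 : (n / τ) * (τ / n) = 1 := by
      field_simp
    linarith
  have hdiag : ∀ j, γ (j + 1) (j + 1) = (n / τ) * θ j := by
    intro j
    cases j with
    | zero =>
        rw [hγ11, hθ0]
        field_simp
    | succ j => exact hγtop j
  intro k
  induction k with
  | zero =>
      refine ⟨?_, ?_, ?_⟩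
      · intro l hl
        interval_cases l
        rw [hγ00]; norm_num
      · simp [hγ00]
      · simp [hγ00, hx0]
  | succ k ih =>
      cases k with
      | zero =>
          have hc0 : (n / τ) * θ 0 = 1 := by
            rw [hθ0]; field_simp
          refine ⟨?_, ?_, ?_⟩
          · intro l hl
            interval_cases l
            · rw [hγ10]
            · rw [hγ11]; norm_num
          · rw [Finset.sum_range_succ, Finset.sum_range_succ, Finset.sum_range_zero,
              hγ10, hγ11]
            norm_num
          · rw [hx 0, hy 0, hx0, hc0, Finset.sum_range_succ, Finset.sum_range_succ,
              Finset.sum_range_zero, hγ10, hγ11]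
            module
      | succ j =>
          obtain ⟨ihn, ihs, ihx⟩ := ih
          have e2 : j + 1 + 1 = j + 2 := rfl
          rw [e2]
          refine ⟨?_, ?_, ?_⟩
          · intro l hl
            rcases Nat.lt_or_ge l (j + 1) with h | h
            · have hlj : l ≤ j := Nat.lt_succ_iff.mp h
              rw [hγrec j l hlj]
              exact mul_nonneg (by linarith [hθle1 (j + 1)])
                (ihn l (le_trans hlj (Nat.le_succ j)))
            · have : l = j + 1 ∨ l = j + 2 := by omega
              rcases this with rfl | rfl
              · rw [hγk j]
                have h1 : 0 ≤ θ (j + 1) * (1 - (n / τ) * θ j) :=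
                  mul_nonneg (le_of_lt (hθpos (j + 1))) (by linarith [hcθ j])
                have h2 : 0 ≤ (n / τ) * (θ j - θ (j + 1)) :=
                  mul_nonneg (le_of_lt hnτ) (by linarith [hmono j])
                linarith
              · rw [hγtop j]
                exact le_of_lt (mul_pos hnτ (hθpos (j + 1)))
          all_goals {
            have hsum1 : ∑ l ∈ Finset.range (j + 1), γ (j + 1) l = 1 - (n / τ) * θ j := by
              have h := ihs
              rw [Finset.sum_range_succ, hdiag j] at h
              linarith
            have hsum0 : ∑ l ∈ Finset.range (j + 1), γ (j + 2) l
                = (1 - θ (j + 1)) * (1 - (n / τ) * θ j) := by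
              rw [← hsum1, Finset.mul_sum]
              refine Finset.sum_congr rfl ?_
              intro l hl
              exact hγrec j l (Nat.lt_succ_iff.mp (Finset.mem_range.mp hl))
            first
            | · rw [Finset.sum_range_succ, Finset.sum_range_succ, hsum0, hγk j, hγtop j]
                ring
            | · have hz1 : x (j + 1) - ((n / τ) * θ j) • z (j + 1)
                  = ∑ l ∈ Finset.range (j + 1), γ (j + 1) l • z l := by
                  rw [ihx, Finset.sum_range_succ, hdiag j]
                  abel
                have hsum2 : ∑ l ∈ Finset.range (j + 1), γ (j + 2) l • z l
                    = (1 - θ (j + 1)) • (x (j + 1) - ((n / τ) * θ j) • z (j + 1)) := by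
                  rw [hz1, Finset.smul_sum]
                  refine Finset.sum_congr rfl ?_
                  intro l hl
                  rw [hγrec j l (Nat.lt_succ_iff.mp (Finset.mem_range.mp hl)), mul_smul]
                have key : x (j + 2) = (1 - θ (j + 1)) • x (j + 1) + θ (j + 1) • z (j + 1)
                    + ((n / τ) * θ (j + 1)) • (z (j + 2) - z (j + 1)) := by
                  rw [hx (j + 1), hy (j + 1)]
                rw [key, Finset.sum_range_succ, Finset.sum_range_succ, hγtop j, hγk j, hsum2]
                module
          }
end

section
/- Under the recursion of the previous lemma, the coefficients satisfy the identity γ_{k+1}^k + ((n−τ)/τ) θ_k = (1 − θ_k) γ_k^k for all k ≥ 0. -/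
theorem gamma_identity (n τ : ℝ) (hn : 0 < n) (hτ : 0 < τ) (hτn : τ ≤ n)
    (θ : ℕ → ℝ) (hθ0 : θ 0 = τ / n)
    (hrec : ∀ k, θ (k + 1) = (Real.sqrt ((θ k) ^ 4 + 4 * (θ k) ^ 2) - (θ k) ^ 2) / 2)
    (γ : ℕ → ℕ → ℝ)
    (hγ00 : γ 0 0 = 1) (hγ10 : γ 1 0 = 0) (hγ11 : γ 1 1 = 1)
    (hγrec : ∀ j : ℕ, ∀ l ≤ j,
      γ (j + 2) l = (1 - θ (j + 1)) * γ (j + 1) l)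
    (hγk : ∀ j : ℕ,
      γ (j + 2) (j + 1) = θ (j + 1) * (1 - (n / τ) * θ j) + (n / τ) * (θ j - θ (j + 1)))
    (hγtop : ∀ j : ℕ, γ (j + 2) (j + 2) = (n / τ) * θ (j + 1)) :
    ∀ k : ℕ, γ (k + 1) k + ((n - τ) / τ) * θ k = (1 - θ k) * γ k k := by
  intro k
  match k with
  | 0 =>
    rw [hγ10, hγ00, hθ0]
    field_simp
    ring
  | Nat.succ j =>
    have hdiag : γ (j + 1) (j + 1) = (n / τ) * θ j := by
      match j with
      | 0 => rw [hγ11, hθ0]; field_simp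
      | Nat.succ i => exact hγtop i
    show γ (j + 2) (j + 1) + (n - τ) / τ * θ (j + 1) = (1 - θ (j + 1)) * γ (j + 1) (j + 1)
    rw [hγk j, hdiag]
    field_simp
    ring
end

section
/- Let ψ : ℝ^N → ℝ ∪ {+∞} be block separable, ψ(x) = Σ_{i=1}^n ψ_i(x^{(i)}), and let Ŝ be a uniform sampling with E|Ŝ| = τ. Then for any a, h ∈ ℝ^N, E[ψ(a + h_{[Ŝ]})] = (1 − τ/n) ψ(a) + (τ/n) ψ(a + h) provided each block belongs to Ŝ with probability τ/n. -/
open Finset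

lemma ereal_mul_add_of_nonneg (c : ℝ) (hc : 0 ≤ c) (x y : EReal) (hx : x ≠ ⊥) (hy : y ≠ ⊥) :
    (c : EReal) * (x + y) = (c : EReal) * x + (c : EReal) * y := by
  rcases eq_or_lt_of_le hc with h0 | hpos
  · simp [← h0]
  have hcpos : (0 : EReal) < (c : EReal) := by exact_mod_cast hpos
  induction x with
  | bot => exact absurd rfl hx
  | top =>
    rw [EReal.top_add_of_ne_bot hy, EReal.mul_top_of_pos hcpos]
    induction y with
    | bot => exact absurd rfl hy
    | top => rw [EReal.mul_top_of_pos hcpos, EReal.top_add_of_ne_bot (by simp)]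
    | coe r =>
      rw [← EReal.coe_mul, EReal.top_add_of_ne_bot (EReal.coe_ne_bot _)]
  | coe r =>
    induction y with
    | bot => exact absurd rfl hy
    | top =>
      rw [EReal.add_top_of_ne_bot (by simp), EReal.mul_top_of_pos hcpos, ← EReal.coe_mul,
        EReal.add_top_of_ne_bot (EReal.coe_ne_bot _)]
    | coe s => norm_cast; ring

lemma ereal_sum_ne_bot {ι : Type*} (s : Finset ι) (f : ι → EReal) (hf : ∀ i ∈ s, f i ≠ ⊥) :
    ∑ i ∈ s, f i ≠ ⊥ := by
  classical
  induction s using Finset.induction with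
  | empty => simp
  | @insert a s hx ih =>
    rw [Finset.sum_insert hx]
    simp only [ne_eq, EReal.add_eq_bot_iff, not_or]
    exact ⟨hf a (by simp), ih fun i hi => hf i (by simp [hi])⟩

lemma ereal_mul_sum_of_nonneg {ι : Type*} (c : ℝ) (hc : 0 ≤ c) (s : Finset ι) (f : ι → EReal)
    (hf : ∀ i ∈ s, f i ≠ ⊥) :
    (c : EReal) * ∑ i ∈ s, f i = ∑ i ∈ s, (c : EReal) * f i := by
  classical
  induction s using Finset.induction with
  | empty => simp
  | @insert a s hx ih =>
    rw [Finset.sum_insert hx, Finset.sum_insert hx,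
      ereal_mul_add_of_nonneg c hc _ _ (hf a (by simp))
        (ereal_sum_ne_bot s f fun i hi => hf i (by simp [hi])),
      ih fun i hi => hf i (by simp [hi])]

lemma ereal_sum_mul_of_nonneg {ι : Type*} (s : Finset ι) (f : ι → ℝ) (hf : ∀ i ∈ s, 0 ≤ f i)
    (x : EReal) :
    ((∑ i ∈ s, f i : ℝ) : EReal) * x = ∑ i ∈ s, (f i : EReal) * x := by
  classical
  induction s using Finset.induction with
  | empty => simp
  | @insert a s hx ih =>
    rw [Finset.sum_insert hx, Finset.sum_insert hx, EReal.coe_add,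
      EReal.right_distrib_of_nonneg (by exact_mod_cast hf a (by simp))
        (by exact_mod_cast Finset.sum_nonneg fun i hi => hf i (by simp [hi])),
      ih fun i hi => hf i (by simp [hi])]

theorem separable_psi_expectation (n : ℕ) (hn : 0 < n) (τ : ℝ) (hτ0 : 0 ≤ τ) (hτn : τ ≤ n)
    (N : Fin n → ℕ)
    (ψi : ∀ i : Fin n, (Fin (N i) → ℝ) → EReal)
    (hψbot : ∀ i z, ψi i z ≠ ⊥)
    -- the sampling: a probability distribution over subsets of [n]
    (p : Finset (Fin n) → ℝ) (hp : ∀ S, 0 ≤ p S) (hp1 : ∑ S : Finset (Fin n), p S = 1)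
    -- each block belongs to the sampling with probability τ/n
    (hunif : ∀ i : Fin n, ∑ S ∈ (univ : Finset (Finset (Fin n))).filter (fun S => i ∈ S), p S
      = τ / n)
    (a h : ∀ i, Fin (N i) → ℝ) :
    ∑ S : Finset (Fin n), ((p S : EReal) *
        ∑ i, ψi i (fun j => if i ∈ S then a i j + h i j else a i j))
      = ((1 - τ / n : ℝ) : EReal) * (∑ i, ψi i (a i)) +
        ((τ / n : ℝ) : EReal) * (∑ i, ψi i (fun j => a i j + h i j)) := by
  classical
  -- distribute p S over the inner sum, then swap
  have step1 : ∀ S : Finset (Fin n),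
      (p S : EReal) * ∑ i, ψi i (fun j => if i ∈ S then a i j + h i j else a i j)
        = ∑ i, (p S : EReal) * ψi i (fun j => if i ∈ S then a i j + h i j else a i j) :=
    fun S => ereal_mul_sum_of_nonneg _ (hp S) _ _ (fun i _ => hψbot i _)
  simp only [step1]
  rw [Finset.sum_comm]
  have key : ∀ i : Fin n,
      ∑ S : Finset (Fin n), (p S : EReal) * ψi i (fun j => if i ∈ S then a i j + h i j else a i j)
        = ((1 - τ / n : ℝ) : EReal) * ψi i (a i) +
          ((τ / n : ℝ) : EReal) * ψi i (fun j => a i j + h i j) := by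
    intro i
    rw [← Finset.sum_filter_add_sum_filter_not univ (fun S => i ∈ S)]
    have h1 : ∀ S ∈ univ.filter (fun S => i ∈ S),
        (p S : EReal) * ψi i (fun j => if i ∈ S then a i j + h i j else a i j)
          = (p S : EReal) * ψi i (fun j => a i j + h i j) := by
      intro S hS
      simp only [mem_filter] at hS
      simp [hS.2]
    have h2 : ∀ S ∈ univ.filter (fun S => ¬ i ∈ S),
        (p S : EReal) * ψi i (fun j => if i ∈ S then a i j + h i j else a i j)
          = (p S : EReal) * ψi i (a i) := by
      intro S hS
      simp only [mem_filter] at hS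
      simp [hS.2]
    rw [Finset.sum_congr rfl h1, Finset.sum_congr rfl h2,
      ← ereal_sum_mul_of_nonneg _ _ (fun S _ => hp S),
      ← ereal_sum_mul_of_nonneg _ _ (fun S _ => hp S),
      hunif i]
    have hnot : ∑ S ∈ univ.filter (fun S => ¬ i ∈ S), p S = 1 - τ / n := by
      have := Finset.sum_filter_add_sum_filter_not univ (fun S => i ∈ S) p
      rw [hunif i, hp1] at this
      linarith
    rw [hnot, add_comm]
  rw [Finset.sum_congr rfl (fun i _ => key i), Finset.sum_add_distrib,
    ← ereal_mul_sum_of_nonneg _ (by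
        have : τ / n ≤ 1 := by
          rw [div_le_one (by exact_mod_cast hn)]
          exact hτn
        linarith) _ _ (fun i _ => hψbot i _),
    ← ereal_mul_sum_of_nonneg _ (div_nonneg hτ0 (by exact_mod_cast hn.le)) _ _
      (fun i _ => hψbot i _)]
end

section
/- Let f_j : ℝ^N → ℝ be convex, differentiable, depending only on blocks in C_j with |C_j| = ω_j ≥ 1, with block-Lipschitz gradients: ‖∇_i f_j(x + U_i t) − ∇_i f_j(x)‖_{(i)}* ≤ L_{ji}‖t‖_{(i)}. Let Ŝ be a τ-nice sampling of [n]. Then for all x, h ∈ ℝ^N: E[f_j(x + h_{[Ŝ]})] ≤ f_j(x) + (τ/n)(⟨∇f_j(x), h⟩ + (β_j/2)‖h‖²_{L_{j:}}), where β_j = 1 + (ω_j − 1)(τ − 1)/max(1, n − 1) and ‖h‖²_{L_{j:}} = Σ_i L_{ji}‖h^{(i)}‖_{(i)}². -/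
open Finset

-- counting lemma
lemma count_subset {α : Type*} [DecidableEq α] (A T : Finset α) (τ : ℕ)
    (hT : T ⊆ A) (hτ : T.card ≤ τ) :
    ((powersetCard τ A).filter (fun S => T ⊆ S)).card
      = Nat.choose (A.card - T.card) (τ - T.card) := by
  rw [← card_sdiff_of_subset hT, ← card_powersetCard (τ - T.card) (A \ T)]
  apply Finset.card_bij' (fun S _ => S \ T) (fun U _ => U ∪ T)
  · intro S hS
    simp only [mem_filter, mem_powersetCard] at hS
    obtain ⟨⟨hSA, hScard⟩, hTS⟩ := hS
    rw [mem_powersetCard]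
    exact ⟨sdiff_subset_sdiff hSA le_rfl, by rw [card_sdiff_of_subset hTS, hScard]⟩
  · intro U hU
    rw [mem_powersetCard] at hU
    obtain ⟨hUA, hUcard⟩ := hU
    have hUT : Disjoint U T := (sdiff_disjoint.mono_left hUA)
    simp only [mem_filter, mem_powersetCard]
    refine ⟨⟨union_subset (hUA.trans (sdiff_subset)) hT, ?_⟩, subset_union_right⟩
    rw [card_union_of_disjoint hUT, hUcard]
    omega
  · intro S hS
    simp only [mem_filter, mem_powersetCard] at hS
    exact sdiff_union_of_subset hS.2
  · intro U hU
    rw [mem_powersetCard] at hU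
    have hUT : Disjoint U T := (sdiff_disjoint.mono_left hU.1)
    rw [union_sdiff_right, sdiff_eq_self_of_disjoint hUT]


lemma descent {n : ℕ} {N : Fin n → ℕ}
    (f : (∀ i : Fin n, EuclideanSpace ℝ (Fin (N i))) → ℝ)
    (hdiff : Differentiable ℝ f) (L : Fin n → ℝ)
    (hlip : ∀ (x : ∀ i, EuclideanSpace ℝ (Fin (N i))) (i : Fin n)
        (t s : EuclideanSpace ℝ (Fin (N i))),
      |fderiv ℝ f (x + Pi.single i t) (Pi.single i s) - fderiv ℝ f x (Pi.single i s)|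
        ≤ L i * ‖t‖ * ‖s‖)
    (x : ∀ i, EuclideanSpace ℝ (Fin (N i))) (i : Fin n)
    (t : EuclideanSpace ℝ (Fin (N i))) :
    f (x + Pi.single i t) ≤ f x + fderiv ℝ f x (Pi.single i t) + L i / 2 * ‖t‖ ^ 2 := by
  set v : ∀ j, EuclideanSpace ℝ (Fin (N j)) := Pi.single i t with hv
  set ψ : ℝ → ℝ := fun s => f (x + s • v) - s * fderiv ℝ f x v - L i / 2 * s ^ 2 * ‖t‖ ^ 2
    with hψ
  have hγ : ∀ s : ℝ, HasDerivAt (fun s : ℝ => x + s • v) v s := by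
    intro s
    simpa using ((hasDerivAt_id s).smul_const v).const_add x
  have hg : ∀ s : ℝ, HasDerivAt (fun s : ℝ => f (x + s • v)) (fderiv ℝ f (x + s • v) v) s :=
    fun s => (hdiff (x + s • v)).hasFDerivAt.comp_hasDerivAt s (hγ s)
  have hψd : ∀ s : ℝ, HasDerivAt ψ
      (fderiv ℝ f (x + s • v) v - fderiv ℝ f x v - L i * s * ‖t‖ ^ 2) s := by
    intro s
    have h1 : HasDerivAt (fun s : ℝ => s * fderiv ℝ f x v) (fderiv ℝ f x v) s := by
      simpa using (hasDerivAt_id s).mul_const (fderiv ℝ f x v)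
    have h2 : HasDerivAt (fun s : ℝ => L i / 2 * s ^ 2 * ‖t‖ ^ 2) (L i * s * ‖t‖ ^ 2) s := by
      have := ((hasDerivAt_pow 2 s).const_mul (L i / 2)).mul_const (‖t‖ ^ 2)
      exact this.congr_deriv (by ring)
    exact ((hg s).sub h1).sub h2
  have key : ∀ s ∈ Set.Icc (0:ℝ) 1, deriv ψ s ≤ 0 := by
    intro s hs
    rw [(hψd s).deriv]
    have hx : x + s • v = x + Pi.single i (s • t) := by
      rw [hv, Pi.single_smul]
    have := hlip x i (s • t) t
    rw [← hx, ← hv] at this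
    have hb : fderiv ℝ f (x + s • v) v - fderiv ℝ f x v ≤ L i * ‖s • t‖ * ‖t‖ :=
      (le_abs_self _).trans this
    have hn : ‖s • t‖ = s * ‖t‖ := by
      rw [norm_smul, Real.norm_eq_abs, abs_of_nonneg hs.1]
    rw [hn] at hb
    have hr : L i * (s * ‖t‖) * ‖t‖ = L i * s * ‖t‖ ^ 2 := by ring
    linarith
  have hanti : AntitoneOn ψ (Set.Icc (0:ℝ) 1) := by
    apply antitoneOn_of_deriv_nonpos (convex_Icc 0 1)
    · have hdψ : Differentiable ℝ ψ := fun s => (hψd s).differentiableAt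
      exact hdψ.continuous.continuousOn
    · intro s hs
      exact (hψd s).differentiableAt.differentiableWithinAt
    · intro s hs
      exact key s (interior_subset hs)
  have h10 : ψ 1 ≤ ψ 0 :=
    hanti (Set.left_mem_Icc.mpr zero_le_one) (Set.right_mem_Icc.mpr zero_le_one) zero_le_one
  norm_num [hψ] at h10
  linarith


variable {n : ℕ} {N : Fin n → ℕ}

lemma perS (f : (∀ i : Fin n, EuclideanSpace ℝ (Fin (N i))) → ℝ)
    (hconv : ConvexOn ℝ Set.univ f)
    (C : Finset (Fin n))
    (hdep : ∀ x y : ∀ i, EuclideanSpace ℝ (Fin (N i)), (∀ i ∈ C, x i = y i) → f x = f y)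
    (L : Fin n → ℝ)
    (hdesc : ∀ (x : ∀ i, EuclideanSpace ℝ (Fin (N i))) (i : Fin n)
        (t : EuclideanSpace ℝ (Fin (N i))),
      f (x + Pi.single i t) ≤ f x + fderiv ℝ f x (Pi.single i t) + L i / 2 * ‖t‖ ^ 2)
    (x h : ∀ i, EuclideanSpace ℝ (Fin (N i))) (S : Finset (Fin n)) :
    f (x + ∑ i ∈ S, Pi.single i (h i))
      ≤ f x + (∑ i ∈ S ∩ C, fderiv ℝ f x (Pi.single i (h i)))
        + (((S ∩ C).card : ℝ) / 2) * ∑ i ∈ S ∩ C, L i * ‖h i‖ ^ 2 := by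
  have hswap : f (x + ∑ i ∈ S, Pi.single i (h i)) = f (x + ∑ i ∈ S ∩ C, Pi.single i (h i)) := by
    apply hdep
    intro j hj
    simp only [Pi.add_apply, Finset.sum_apply, Finset.sum_pi_single, mem_inter, hj, and_true]
  rw [hswap]
  set T := S ∩ C with hT
  rcases Nat.eq_zero_or_pos T.card with hk0 | hk1
  · rw [Finset.card_eq_zero] at hk0
    simp [hk0]
  · set k : ℕ := T.card with hk
    have hkR : (0:ℝ) < (k:ℝ) := by exact_mod_cast hk1
    have hsum : x + ∑ i ∈ T, Pi.single i (h i)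
        = ∑ i ∈ T, ((k:ℝ)⁻¹ • (x + Pi.single i ((k:ℝ) • h i))) := by
      simp only [Pi.single_smul, smul_add, Finset.sum_add_distrib, smul_smul,
        inv_mul_cancel₀ hkR.ne', one_smul]
      congr 1
      rw [Finset.sum_const, ← hk, ← Nat.cast_smul_eq_nsmul ℝ, smul_smul,
        mul_inv_cancel₀ hkR.ne', one_smul]
  -- Jensen
    have hjen := hconv.map_sum_le (t := T) (w := fun _ => (k:ℝ)⁻¹)
      (p := fun i => x + Pi.single i ((k:ℝ) • h i))
      (fun i _ => by positivity)
      (by rw [Finset.sum_const, ← hk, nsmul_eq_mul, mul_inv_cancel₀ hkR.ne'])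
      (fun i _ => Set.mem_univ _)
    rw [← hsum] at hjen
    refine hjen.trans ?_
    have hbound : ∀ i ∈ T, f (x + Pi.single i ((k:ℝ) • h i))
        ≤ f x + (k:ℝ) * fderiv ℝ f x (Pi.single i (h i))
          + L i / 2 * (k:ℝ)^2 * ‖h i‖ ^ 2 := by
      intro i _
      refine (hdesc x i ((k:ℝ) • h i)).trans ?_
      rw [Pi.single_smul, (fderiv ℝ f x).map_smul, norm_smul]
      simp only [smul_eq_mul, Real.norm_natCast]
      nlinarith [sq_nonneg ((k:ℝ) * ‖h i‖)]
    calc ∑ i ∈ T, (k:ℝ)⁻¹ • f (x + Pi.single i ((k:ℝ) • h i))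
        ≤ ∑ i ∈ T, (k:ℝ)⁻¹ * (f x + (k:ℝ) * fderiv ℝ f x (Pi.single i (h i))
            + L i / 2 * (k:ℝ)^2 * ‖h i‖ ^ 2) := by
          apply Finset.sum_le_sum
          intro i hi
          exact mul_le_mul_of_nonneg_left (hbound i hi) (by positivity)
      _ = f x + (∑ i ∈ T, fderiv ℝ f x (Pi.single i (h i)))
            + ((k:ℝ) / 2) * ∑ i ∈ T, L i * ‖h i‖ ^ 2 := by
          have hterm : ∀ i ∈ T, (k:ℝ)⁻¹ * (f x + (k:ℝ) * fderiv ℝ f x (Pi.single i (h i))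
              + L i / 2 * (k:ℝ)^2 * ‖h i‖ ^ 2)
            = (k:ℝ)⁻¹ * f x + fderiv ℝ f x (Pi.single i (h i))
              + (k:ℝ) / 2 * (L i * ‖h i‖ ^ 2) := by
            intro i _
            field_simp
          rw [Finset.sum_congr rfl hterm]
          simp only [Finset.sum_add_distrib, Finset.sum_const, ← hk, nsmul_eq_mul,
            ← Finset.mul_sum]
          rw [← mul_assoc, mul_inv_cancel₀ hkR.ne', one_mul]



variable {n : ℕ}

lemma single_count (τ : ℕ) (hτ : 1 ≤ τ) (i : Fin n) :
    ((powersetCard τ (univ : Finset (Fin n))).filter (fun S => i ∈ S)).card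
      = Nat.choose (n - 1) (τ - 1) := by
  have : ((powersetCard τ (univ : Finset (Fin n))).filter (fun S => i ∈ S))
      = ((powersetCard τ (univ : Finset (Fin n))).filter (fun S => {i} ⊆ S)) := by
    simp [singleton_subset_iff]
  rw [this, count_subset _ _ _ (subset_univ _) (by simpa using hτ)]
  simp

lemma pair_count (τ : ℕ) (hτ : 2 ≤ τ) (i j : Fin n) (hij : i ≠ j) :
    ((powersetCard τ (univ : Finset (Fin n))).filter (fun S => i ∈ S ∧ j ∈ S)).card
      = Nat.choose (n - 2) (τ - 2) := by
  have hcard : ({i, j} : Finset (Fin n)).card = 2 := by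
    rw [card_insert_of_notMem (by simp [hij]), card_singleton]
  have : ((powersetCard τ (univ : Finset (Fin n))).filter (fun S => i ∈ S ∧ j ∈ S))
      = ((powersetCard τ (univ : Finset (Fin n))).filter (fun S => ({i, j} : Finset (Fin n)) ⊆ S)) := by
    simp [insert_subset_iff, singleton_subset_iff]
  rw [this, count_subset _ _ _ (subset_univ _) (by rw [hcard]; exact hτ)]
  simp [hcard]

lemma pair_count_one (i j : Fin n) (hij : i ≠ j) :
    ((powersetCard 1 (univ : Finset (Fin n))).filter (fun S => i ∈ S ∧ j ∈ S)).card = 0 := by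
  rw [Finset.card_eq_zero, Finset.filter_eq_empty_iff]
  intro S hS
  rw [mem_powersetCard] at hS
  rintro ⟨hi, hj⟩
  obtain ⟨a, rfl⟩ := Finset.card_eq_one.mp hS.2
  rw [mem_singleton] at hi hj
  exact hij (hi.trans hj.symm)

lemma key_count (τ : ℕ) (hτ : 1 ≤ τ) (C : Finset (Fin n)) (i : Fin n) (hi : i ∈ C) :
    (∑ S ∈ (powersetCard τ (univ : Finset (Fin n))).filter (fun S => i ∈ S), (S ∩ C).card)
      = Nat.choose (n - 1) (τ - 1)
        + ∑ j ∈ C.erase i,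
            ((powersetCard τ (univ : Finset (Fin n))).filter (fun S => i ∈ S ∧ j ∈ S)).card := by
  have hstep : ∀ S : Finset (Fin n), (S ∩ C).card = ∑ j ∈ C, if j ∈ S then 1 else 0 := by
    intro S
    rw [inter_comm, ← Finset.filter_mem_eq_inter, Finset.card_filter]
  calc (∑ S ∈ (powersetCard τ (univ : Finset (Fin n))).filter (fun S => i ∈ S), (S ∩ C).card)
      = ∑ S ∈ (powersetCard τ (univ : Finset (Fin n))).filter (fun S => i ∈ S),
          ∑ j ∈ C, if j ∈ S then 1 else 0 := Finset.sum_congr rfl (fun S _ => hstep S)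
    _ = ∑ j ∈ C, ∑ S ∈ (powersetCard τ (univ : Finset (Fin n))).filter (fun S => i ∈ S),
          if j ∈ S then 1 else 0 := Finset.sum_comm
    _ = ∑ j ∈ C, ((powersetCard τ (univ : Finset (Fin n))).filter (fun S => i ∈ S ∧ j ∈ S)).card := by
        apply Finset.sum_congr rfl
        intro j _
        rw [Finset.card_filter, Finset.sum_filter]
        apply Finset.sum_congr rfl
        intro S _
        by_cases h1 : i ∈ S <;> by_cases h2 : j ∈ S <;> simp [h1, h2]
    _ = _ := by
        rw [← Finset.add_sum_erase _ _ hi]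
        congr 1
        rw [← single_count τ hτ i]
        congr 1
        ext S
        simp

variable {n : ℕ} {N : Fin n → ℕ}

lemma grad_zero (f : (∀ i : Fin n, EuclideanSpace ℝ (Fin (N i))) → ℝ)
    (hdiff : Differentiable ℝ f) (C : Finset (Fin n))
    (hdep : ∀ x y : ∀ i, EuclideanSpace ℝ (Fin (N i)), (∀ i ∈ C, x i = y i) → f x = f y)
    (x : ∀ i, EuclideanSpace ℝ (Fin (N i))) (i : Fin n) (hi : i ∉ C)
    (u : EuclideanSpace ℝ (Fin (N i))) :
    fderiv ℝ f x (Pi.single i u) = 0 := by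
  set v : ∀ j, EuclideanSpace ℝ (Fin (N j)) := Pi.single i u with hv
  have hγ : HasDerivAt (fun s : ℝ => x + s • v) v 0 := by
    simpa using ((hasDerivAt_id (0:ℝ)).smul_const v).const_add x
  have hg : HasDerivAt (fun s : ℝ => f (x + s • v)) (fderiv ℝ f (x + (0:ℝ) • v) v) 0 :=
    (hdiff _).hasFDerivAt.comp_hasDerivAt 0 hγ
  have hconst : (fun s : ℝ => f (x + s • v)) = fun _ => f x := by
    funext s
    apply hdep
    intro j hj
    have hji : j ≠ i := fun e => hi (e ▸ hj)
    simp [hv, Pi.single_eq_of_ne hji]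
  rw [hconst] at hg
  have := (hasDerivAt_const (0:ℝ) (f x)).unique hg
  have hx : x + (0:ℝ) • v = x := by simp
  rw [← hx]
  exact this.symm

lemma grad_sum (f : (∀ i : Fin n, EuclideanSpace ℝ (Fin (N i))) → ℝ)
    (h : ∀ i, EuclideanSpace ℝ (Fin (N i)))
    (x : ∀ i, EuclideanSpace ℝ (Fin (N i))) :
    fderiv ℝ f x h = ∑ i, fderiv ℝ f x (Pi.single i (h i)) := by
  have : h = ∑ i, Pi.single i (h i) := by
    funext j
    simp [Finset.sum_apply, Finset.sum_pi_single]
  conv_lhs => rw [this]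
  exact map_sum (fderiv ℝ f x) _ _

lemma nat_id1 (n τ : ℕ) (hτ : 1 ≤ τ) (hn : 1 ≤ n) :
    n * Nat.choose (n-1) (τ-1) = τ * Nat.choose n τ := by
  obtain ⟨m, rfl⟩ : ∃ m, n = m + 1 := ⟨n - 1, by omega⟩
  obtain ⟨k, rfl⟩ : ∃ k, τ = k + 1 := ⟨τ - 1, by omega⟩
  simpa [mul_comm] using Nat.add_one_mul_choose_eq m k


lemma swap_sum {n : ℕ} (P : Finset (Finset (Fin n))) (C : Finset (Fin n))
    (g : Finset (Fin n) → Fin n → ℝ) :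
    ∑ S ∈ P, ∑ i ∈ S ∩ C, g S i
      = ∑ i ∈ C, ∑ S ∈ P.filter (fun S => i ∈ S), g S i := by
  calc ∑ S ∈ P, ∑ i ∈ S ∩ C, g S i
      = ∑ S ∈ P, ∑ i ∈ C, if i ∈ S then g S i else 0 := by
        apply Finset.sum_congr rfl; intro S _
        rw [inter_comm, ← Finset.filter_mem_eq_inter, Finset.sum_filter]
    _ = ∑ i ∈ C, ∑ S ∈ P, if i ∈ S then g S i else 0 := Finset.sum_comm
    _ = _ := by
        apply Finset.sum_congr rfl; intro i _
        rw [Finset.sum_filter]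

lemma nat_id2 (n τ : ℕ) (hτ : 2 ≤ τ) (hn : 2 ≤ n) :
    (n-1) * Nat.choose (n-2) (τ-2) = (τ-1) * Nat.choose (n-1) (τ-1) := by
  obtain ⟨m, rfl⟩ : ∃ m, n = m + 2 := ⟨n - 2, by omega⟩
  obtain ⟨k, rfl⟩ : ∃ k, τ = k + 2 := ⟨τ - 2, by omega⟩
  simpa [mul_comm] using Nat.add_one_mul_choose_eq m k

theorem eso_for_partially_separable_function (n τ : ℕ) (hτ1 : 1 ≤ τ) (hτn : τ ≤ n)
    (N : Fin n → ℕ)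
    (f : (∀ i : Fin n, EuclideanSpace ℝ (Fin (N i))) → ℝ)
    (hconv : ConvexOn ℝ Set.univ f) (hdiff : Differentiable ℝ f)
    (C : Finset (Fin n)) (hω : 1 ≤ C.card)
    -- f depends only on blocks in C
    (hdep : ∀ x y : ∀ i, EuclideanSpace ℝ (Fin (N i)), (∀ i ∈ C, x i = y i) → f x = f y)
    (L : Fin n → ℝ) (hL : ∀ i, 0 ≤ L i) (hL0 : ∀ i ∉ C, L i = 0)
    -- block-Lipschitz gradient: ‖∇_i f(x + U_i t) − ∇_i f(x)‖_(i)* ≤ L_i ‖t‖_(i)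
    (hlip : ∀ (x : ∀ i, EuclideanSpace ℝ (Fin (N i))) (i : Fin n)
        (t s : EuclideanSpace ℝ (Fin (N i))),
      |fderiv ℝ f (x + Pi.single i t) (Pi.single i s) - fderiv ℝ f x (Pi.single i s)|
        ≤ L i * ‖t‖ * ‖s‖) :
    ∀ (x h : ∀ i, EuclideanSpace ℝ (Fin (N i))),
      (∑ S ∈ Finset.powersetCard τ (univ : Finset (Fin n)),
          f (x + ∑ i ∈ S, Pi.single i (h i))) /
        ((Finset.powersetCard τ (univ : Finset (Fin n))).card : ℝ)
      ≤ f x + ((τ : ℝ) / n) * (fderiv ℝ f x h +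
          ((1 + ((C.card : ℝ) - 1) * ((τ : ℝ) - 1) / max 1 ((n : ℝ) - 1)) / 2) *
            ∑ i, L i * ‖h i‖ ^ 2) := by
  intro x h
  classical
  have hn1 : 1 ≤ n := le_trans hτ1 hτn
  set P := Finset.powersetCard τ (univ : Finset (Fin n)) with hP
  have hMnat : P.card = Nat.choose n τ := by
    rw [hP, card_powersetCard, card_univ, Fintype.card_fin]
  have hMpos : 0 < P.card := by rw [hMnat]; exact Nat.choose_pos hτn
  have hMR : (0:ℝ) < (P.card:ℝ) := by exact_mod_cast hMpos
  have hn0 : ((n:ℝ)) ≠ 0 := by 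
    have : (0:ℝ) < n := by exact_mod_cast hn1
    linarith
  set D : Fin n → ℝ := fun i => fderiv ℝ f x (Pi.single i (h i)) with hD
  set Q : Fin n → ℝ := fun i => L i * ‖h i‖ ^ 2 with hQ
  have hdesc := descent f hdiff L hlip
  set c1 := Nat.choose (n-1) (τ-1) with hc1
  set c2 := if 2 ≤ τ then Nat.choose (n-2) (τ-2) else 0 with hc2
  set A := c1 + (C.card - 1) * c2 with hA
  have hcnt : ∀ i ∈ C, (P.filter (fun S => i ∈ S)).card = c1 := fun i _ => single_count τ hτ1 i
  have hAcnt : ∀ i ∈ C, (∑ S ∈ P.filter (fun S => i ∈ S), (S ∩ C).card) = A := by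
    intro i hi
    rw [hP, key_count τ hτ1 C i hi, hA, hc2]
    congr 1
    by_cases h2 : 2 ≤ τ
    · rw [if_pos h2,
        Finset.sum_congr rfl (fun j hj => pair_count τ h2 i j (Ne.symm (Finset.mem_erase.mp hj).1)),
        Finset.sum_const, smul_eq_mul, Finset.card_erase_of_mem hi, mul_comm]
    · rw [if_neg h2]
      have hτ1' : τ = 1 := by omega
      subst hτ1'
      rw [Finset.sum_congr rfl
        (fun j hj => pair_count_one i j (Ne.symm (Finset.mem_erase.mp hj).1))]
      simp
  -- step 1
  have step1 : (∑ S ∈ P, f (x + ∑ i ∈ S, Pi.single i (h i)))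
      ≤ (P.card : ℝ) * f x + (c1:ℝ) * (∑ i ∈ C, D i) + (1/2) * ((A:ℝ) * ∑ i ∈ C, Q i) := by
    calc ∑ S ∈ P, f (x + ∑ i ∈ S, Pi.single i (h i))
        ≤ ∑ S ∈ P, (f x + (∑ i ∈ S ∩ C, D i) + (((S ∩ C).card : ℝ)/2) * ∑ i ∈ S ∩ C, Q i) :=
          Finset.sum_le_sum (fun S _ => perS f hconv C hdep L hdesc x h S)
      _ = (P.card : ℝ) * f x + (∑ S ∈ P, ∑ i ∈ S ∩ C, D i)
            + (1/2) * ∑ S ∈ P, ∑ i ∈ S ∩ C, (((S∩C).card : ℝ) * Q i) := by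
          rw [Finset.sum_add_distrib, Finset.sum_add_distrib, Finset.sum_const, nsmul_eq_mul]
          congr 1
          rw [Finset.mul_sum]
          apply Finset.sum_congr rfl
          intro S _
          rw [Finset.mul_sum, Finset.mul_sum]
          exact Finset.sum_congr rfl (fun i _ => by ring)
      _ = (P.card:ℝ) * f x + (∑ i ∈ C, ∑ S ∈ P.filter (fun S => i ∈ S), D i)
            + (1/2) * ∑ i ∈ C, ∑ S ∈ P.filter (fun S => i ∈ S), (((S∩C).card:ℝ) * Q i) := by
          rw [swap_sum P C (fun S i => D i), swap_sum P C (fun S i => ((S∩C).card:ℝ) * Q i)]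
      _ = _ := by
          congr 1
          · congr 1
            rw [Finset.mul_sum]
            apply Finset.sum_congr rfl
            intro i hi
            rw [Finset.sum_const, nsmul_eq_mul, hcnt i hi]
          · congr 1
            rw [Finset.mul_sum]
            apply Finset.sum_congr rfl
            intro i hi
            rw [← Finset.sum_mul, ← Nat.cast_sum, hAcnt i hi]
  have hG : (∑ i ∈ C, D i) = fderiv ℝ f x h := by
    rw [grad_sum f h x]
    exact Finset.sum_subset (subset_univ C)
      (fun i _ hi => grad_zero f hdiff C hdep x i hi (h i))
  have hQsum : (∑ i ∈ C, Q i) = ∑ i, Q i :=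
    Finset.sum_subset (subset_univ C) (fun i _ hi => by simp [hQ, hL0 i hi])
  rw [hG, hQsum] at step1
  -- count identities over ℝ
  have e1 : (c1:ℝ) * n = τ * P.card := by
    rw [hMnat]
    exact_mod_cast (by rw [mul_comm c1 n]; exact nat_id1 n τ hτ1 hn1 :
      c1 * n = τ * Nat.choose n τ)
  have e1' : (c1:ℝ) = τ / n * P.card := by
    field_simp
    linarith
  have eA : (A:ℝ) = τ / n * ((1 + ((C.card : ℝ) - 1) * ((τ : ℝ) - 1) / max 1 ((n : ℝ) - 1)))
      * P.card := by
    by_cases h2 : 2 ≤ τ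
    · have hn2 : 2 ≤ n := le_trans h2 hτn
      have hmax : max 1 ((n:ℝ)-1) = (n:ℝ)-1 := by
        rw [max_eq_right]
        have : (2:ℝ) ≤ n := by exact_mod_cast hn2
        linarith
      have hnm1 : ((n:ℝ)-1) ≠ 0 := by
        have : (2:ℝ) ≤ n := by exact_mod_cast hn2
        linarith
      have e2 : (c2:ℝ) * ((n:ℝ)-1) = ((τ:ℝ)-1) * c1 := by
        rw [hc2, if_pos h2]
        have := nat_id2 n τ h2 hn2
        have hcast : (((n-1) * Nat.choose (n-2) (τ-2) : ℕ) : ℝ)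
            = (((τ-1) * Nat.choose (n-1) (τ-1) : ℕ) : ℝ) := by exact_mod_cast this
        push_cast [Nat.cast_sub (le_trans one_le_two hn2), Nat.cast_sub (le_trans one_le_two h2)]
          at hcast
        rw [hc1]
        push_cast
        linarith
      have hAr : (A:ℝ) = (c1:ℝ) + ((C.card:ℝ) - 1) * c2 := by
        rw [hA]
        push_cast [Nat.cast_sub hω]
        ring
      rw [hAr, hmax]
      field_simp
      linear_combination ((n:ℝ)-1) * e1 + ((C.card:ℝ)-1) * (n:ℝ) * e2
        + ((C.card:ℝ)-1) * ((τ:ℝ)-1) * e1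
    · have hτe : τ = 1 := by omega
      subst hτe
      have hAr : (A:ℝ) = (c1:ℝ) := by
        rw [hA, hc2, if_neg h2]
        push_cast
        ring
      rw [hAr, e1']
      push_cast
      ring
  rw [div_le_iff₀ hMR]
  refine step1.trans (le_of_eq ?_)
  rw [e1', eA]
  ring
end

section
/- Let f = Σ_{j=1}^m f_j with each f_j convex, differentiable, depending on blocks in C_j (|C_j| = ω_j), and having block-Lipschitz gradient constants L_{ji}. Then for all x, h ∈ ℝ^N: f(x + h) ≤ f(x) + ⟨∇f(x), h⟩ + (ω̄ L̄/2)‖h‖_w², where ω̄ = Σ_j ω_j (Σ_i L_{ji})/(Σ_{k,i} L_{ki}), L̄ = (Σ_{j,i} L_{ji})/n, and w_i = n (Σ_j ω_j L_{ji})/(Σ_{j,i} ω_j L_{ji}). -/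
open Finset

abbrev PiE {n : ℕ} (N : Fin n → ℕ) := ∀ i : Fin n, EuclideanSpace ℝ (Fin (N i))

section helpers
variable {n : ℕ} {N : Fin n → ℕ}

lemma line_hasDerivAt (F : PiE N → ℝ) (hF : Differentiable ℝ F)
    (x : PiE N) (i : Fin n) (t : EuclideanSpace ℝ (Fin (N i))) (τ : ℝ) :
    HasDerivAt (fun τ : ℝ => F (x + Pi.single i (τ • t)))
      (fderiv ℝ F (x + Pi.single i (τ • t)) (Pi.single i t)) τ := by
  have hc : HasDerivAt (fun τ : ℝ => x + Pi.single i (τ • t)) (Pi.single i t : PiE N) τ := by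
    have h1 : ∀ σ : ℝ, x + Pi.single i (σ • t) = x + σ • (Pi.single i t : PiE N) := by
      intro σ; rw [Pi.single_smul]
    simp only [h1]
    simpa using ((hasDerivAt_id τ).smul_const (Pi.single i t : PiE N)).const_add x
  exact (hF _).hasFDerivAt.comp_hasDerivAt τ hc

end helpers

section helpers2
variable {n : ℕ} {N : Fin n → ℕ}

lemma block_descent (F : PiE N → ℝ) (hF : Differentiable ℝ F)
    (x : PiE N) (i : Fin n) (t : EuclideanSpace ℝ (Fin (N i))) (Lc : ℝ)
    (hlip : ∀ (u s : EuclideanSpace ℝ (Fin (N i))),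
      |fderiv ℝ F (x + Pi.single i u) (Pi.single i s) - fderiv ℝ F x (Pi.single i s)|
        ≤ Lc * ‖u‖ * ‖s‖) :
    F (x + Pi.single i t) ≤ F x + fderiv ℝ F x (Pi.single i t) + Lc / 2 * ‖t‖ ^ 2 := by
  set D := fderiv ℝ F x (Pi.single i t) with hD
  set ψ : ℝ → ℝ := fun τ => F (x + Pi.single i (τ • t)) - τ * D - Lc * ‖t‖ ^ 2 * τ ^ 2 / 2
    with hψ
  have hψd : ∀ τ : ℝ, HasDerivAt ψ
      (fderiv ℝ F (x + Pi.single i (τ • t)) (Pi.single i t) - D - Lc * ‖t‖ ^ 2 * τ) τ := by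
    intro τ
    have h1 := line_hasDerivAt F hF x i t τ
    have h2 : HasDerivAt (fun τ : ℝ => τ * D) D τ := by
      simpa using (hasDerivAt_id τ).mul_const D
    have h3 : HasDerivAt (fun τ : ℝ => Lc * ‖t‖ ^ 2 * τ ^ 2 / 2) (Lc * ‖t‖ ^ 2 * τ) τ := by
      have := ((hasDerivAt_pow 2 τ).const_mul (Lc * ‖t‖ ^ 2)).div_const 2
      exact this.congr_deriv (by norm_num [mul_comm]; ring)
    exact (h1.sub h2).sub h3
  have hanti : AntitoneOn ψ (Set.Icc (0:ℝ) 1) := by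
    apply antitoneOn_of_deriv_nonpos (convex_Icc 0 1)
    · exact fun τ _ => ((hψd τ).continuousAt).continuousWithinAt
    · exact fun τ _ => ((hψd τ).differentiableAt).differentiableWithinAt
    · intro τ hτ
      rw [interior_Icc] at hτ
      rw [(hψd τ).deriv]
      have hb := hlip (τ • t) t
      have : fderiv ℝ F (x + Pi.single i (τ • t)) (Pi.single i t) - D
          ≤ Lc * ‖τ • t‖ * ‖t‖ := le_trans (le_abs_self _) hb
      have hn : Lc * ‖τ • t‖ * ‖t‖ = Lc * ‖t‖ ^ 2 * τ := by
        rw [norm_smul, Real.norm_eq_abs, abs_of_pos hτ.1]; ring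
      linarith [this]
  have key := hanti (Set.mem_Icc.mpr ⟨le_refl 0, zero_le_one⟩)
    (Set.mem_Icc.mpr ⟨zero_le_one, le_refl 1⟩) zero_le_one
  simp only [hψ] at key
  norm_num at key
  linarith [key]

lemma off_support_zero (F : PiE N → ℝ) (hF : Differentiable ℝ F)
    (C : Finset (Fin n)) (hdep : ∀ x y : PiE N, (∀ i ∈ C, x i = y i) → F x = F y)
    (x : PiE N) (i : Fin n) (hi : i ∉ C) (s : EuclideanSpace ℝ (Fin (N i))) :
    fderiv ℝ F x (Pi.single i s) = 0 := by
  have hconst : ∀ τ : ℝ, F (x + Pi.single i (τ • s)) = F x := by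
    intro τ
    apply hdep
    intro i' hi'
    have hne : i' ≠ i := fun h => hi (h ▸ hi')
    simp [Pi.single_eq_of_ne hne]
  have h1 := line_hasDerivAt F hF x i s 0
  have h2 : HasDerivAt (fun τ : ℝ => F (x + Pi.single i (τ • s))) 0 0 := by
    have : (fun τ : ℝ => F (x + Pi.single i (τ • s))) = fun _ => F x := funext hconst
    rw [this]; exact hasDerivAt_const 0 _
  have := h1.unique h2
  rwa [zero_smul, Pi.single_zero, add_zero] at this

lemma single_sum_apply (C : Finset (Fin n)) (h : PiE N) {i' : Fin n} (hi' : i' ∈ C) :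
    (∑ i ∈ C, (Pi.single i (h i) : PiE N)) i' = h i' := by
  rw [Finset.sum_apply]
  exact (Finset.sum_eq_single_of_mem i'  hi'
    (fun i _ hne => Pi.single_eq_of_ne (Ne.symm hne) _)).trans (Pi.single_eq_same _ _)

lemma per_function_bound (F : PiE N → ℝ)
    (hconv : ConvexOn ℝ Set.univ F) (hF : Differentiable ℝ F)
    (C : Finset (Fin n)) (hdep : ∀ x y : PiE N, (∀ i ∈ C, x i = y i) → F x = F y)
    (Lr : Fin n → ℝ)
    (hlip : ∀ (x : PiE N) (i : Fin n) (t s : EuclideanSpace ℝ (Fin (N i))),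
      |fderiv ℝ F (x + Pi.single i t) (Pi.single i s) - fderiv ℝ F x (Pi.single i s)|
        ≤ Lr i * ‖t‖ * ‖s‖)
    (x h : PiE N) :
    F (x + h) ≤ F x + ∑ i ∈ C, fderiv ℝ F x (Pi.single i (h i))
      + (C.card : ℝ) / 2 * ∑ i ∈ C, Lr i * ‖h i‖ ^ 2 := by
  rcases C.eq_empty_or_nonempty with hC | hC
  · subst hC
    have : F (x + h) = F x := hdep _ _ (by simp)
    simp [this]
  · set ω : ℝ := (C.card : ℝ) with hω
    have hω0 : 0 < ω := by
      simp only [hω]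
      exact_mod_cast Finset.card_pos.mpr hC
    set p : Fin n → PiE N := fun i => x + Pi.single i (ω • h i) with hp
    have hwsum : ∑ _i ∈ C, (ω⁻¹ : ℝ) = 1 := by
      rw [Finset.sum_const, nsmul_eq_mul]
      exact mul_inv_cancel₀ hω0.ne'
    have hrep : x + (∑ i ∈ C, (Pi.single i (h i) : PiE N)) = ∑ i ∈ C, (ω⁻¹ : ℝ) • p i := by
      have : ∀ i ∈ C, (ω⁻¹ : ℝ) • p i
          = (ω⁻¹ : ℝ) • x + (Pi.single i (h i) : PiE N) := by
        intro i _
        simp only [hp, smul_add]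
        congr 1
        rw [Pi.single_smul, smul_smul, inv_mul_cancel₀ hω0.ne', one_smul]
      rw [Finset.sum_congr rfl this, Finset.sum_add_distrib, ← Finset.sum_smul, hwsum,
        one_smul]
    have hdep1 : F (x + h) = F (x + ∑ i ∈ C, (Pi.single i (h i) : PiE N)) := by
      apply hdep
      intro i' hi'
      simp only [Pi.add_apply]
      rw [single_sum_apply C h hi']
    have hconvle : F (∑ i ∈ C, (ω⁻¹ : ℝ) • p i) ≤ ∑ i ∈ C, ω⁻¹ * F (p i) := by
      have := hconv.map_sum_le (fun i _ => by positivity) hwsum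
        (fun i _ => Set.mem_univ (p i))
      simpa [smul_eq_mul] using this
    have hblock : ∀ i ∈ C, F (p i) ≤ F x + ω * fderiv ℝ F x (Pi.single i (h i))
        + Lr i / 2 * (ω ^ 2 * ‖h i‖ ^ 2) := by
      intro i _
      have hb := block_descent F hF x i (ω • h i) (Lr i) (fun u s => hlip x i u s)
      have e1 : fderiv ℝ F x (Pi.single i (ω • h i))
          = ω * fderiv ℝ F x (Pi.single i (h i)) := by
        rw [Pi.single_smul, (fderiv ℝ F x).map_smul, smul_eq_mul]
      have e2 : ‖ω • h i‖ ^ 2 = ω ^ 2 * ‖h i‖ ^ 2 := by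
        rw [norm_smul, Real.norm_eq_abs, abs_of_pos hω0, mul_pow]
      rw [e1, e2] at hb
      exact hb
    calc F (x + h) = F (∑ i ∈ C, (ω⁻¹ : ℝ) • p i) := by rw [hdep1, hrep]
      _ ≤ ∑ i ∈ C, ω⁻¹ * F (p i) := hconvle
      _ ≤ ∑ i ∈ C, ω⁻¹ * (F x + ω * fderiv ℝ F x (Pi.single i (h i))
            + Lr i / 2 * (ω ^ 2 * ‖h i‖ ^ 2)) := by
          apply Finset.sum_le_sum
          intro i hi
          exact mul_le_mul_of_nonneg_left (hblock i hi) (by positivity)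
      _ = ∑ i ∈ C, (ω⁻¹ * F x + fderiv ℝ F x (Pi.single i (h i))
            + ω / 2 * (Lr i * ‖h i‖ ^ 2)) := by
          apply Finset.sum_congr rfl
          intro i _
          field_simp
      _ = F x + ∑ i ∈ C, fderiv ℝ F x (Pi.single i (h i))
            + (C.card : ℝ) / 2 * ∑ i ∈ C, Lr i * ‖h i‖ ^ 2 := by
          rw [Finset.sum_add_distrib, Finset.sum_add_distrib, ← Finset.sum_mul, hwsum,
            one_mul, ← Finset.mul_sum]

end helpers2


lemma arith_lemma (m n : ℕ) (a : Fin m → ℝ) (L : Fin m → Fin n → ℝ) (q : Fin n → ℝ)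
    (hS : (∑ j, ∑ i, L j i) ≠ 0) (hT : (∑ j, ∑ i, a j * L j i) ≠ 0) (hn : (n : ℝ) ≠ 0) :
    ((∑ j, a j * (∑ i, L j i) / (∑ k, ∑ i, L k i)) * ((∑ j, ∑ i, L j i) / n) / 2) *
      ∑ i, ((n : ℝ) * (∑ j, a j * L j i) / (∑ j, ∑ i', a j * L j i')) * q i
    = ∑ j, a j / 2 * ∑ i, L j i * q i := by
  set S : ℝ := ∑ j, ∑ i, L j i with hSdef
  set T : ℝ := ∑ j, ∑ i, a j * L j i with hTdef
  have e1 : ∑ j, a j * (∑ i, L j i) / S = T / S := by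
    rw [← Finset.sum_div, hTdef]
    congr 1
    exact Finset.sum_congr rfl (fun j _ => Finset.mul_sum _ _ _)
  have e2 : ∑ i, ((n : ℝ) * (∑ j, a j * L j i) / T) * q i
      = ((n : ℝ) / T) * ∑ i, (∑ j, a j * L j i) * q i := by
    rw [Finset.mul_sum]
    exact Finset.sum_congr rfl (fun i _ => by ring)
  have e3 : ∑ j, a j / 2 * ∑ i, L j i * q i
      = (1 / 2) * ∑ i, (∑ j, a j * L j i) * q i := by
    rw [Finset.mul_sum]
    simp only [Finset.sum_mul, Finset.mul_sum]
    rw [Finset.sum_comm]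
    exact Finset.sum_congr rfl (fun j _ => Finset.sum_congr rfl (fun i _ => by ring))
  rw [e1, e2, e3, ← mul_assoc]
  congr 1
  field_simp

theorem dso_with_average_degree_of_separability (n m : ℕ)
    (N : Fin n → ℕ)
    (f : Fin m → (∀ i : Fin n, EuclideanSpace ℝ (Fin (N i))) → ℝ)
    (hconv : ∀ j, ConvexOn ℝ Set.univ (f j)) (hdiff : ∀ j, Differentiable ℝ (f j))
    (C : Fin m → Finset (Fin n))
    (hdep : ∀ j, ∀ x y : ∀ i, EuclideanSpace ℝ (Fin (N i)),
      (∀ i ∈ C j, x i = y i) → f j x = f j y)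
    (L : Fin m → Fin n → ℝ) (hL : ∀ j i, 0 ≤ L j i) (hL0 : ∀ j, ∀ i ∉ C j, L j i = 0)
    (hlip : ∀ j, ∀ (x : ∀ i, EuclideanSpace ℝ (Fin (N i))) (i : Fin n)
        (t s : EuclideanSpace ℝ (Fin (N i))),
      |fderiv ℝ (f j) (x + Pi.single i t) (Pi.single i s) - fderiv ℝ (f j) x (Pi.single i s)|
        ≤ L j i * ‖t‖ * ‖s‖)
    (hLsum : 0 < ∑ j, ∑ i, L j i)
    (hωLsum : 0 < ∑ j, ∑ i, ((C j).card : ℝ) * L j i) :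
    ∀ (x h : ∀ i, EuclideanSpace ℝ (Fin (N i))),
      (∑ j, f j (x + h)) ≤ (∑ j, f j x) +
        fderiv ℝ (fun y => ∑ j, f j y) x h +
        ((∑ j, ((C j).card : ℝ) * (∑ i, L j i) / (∑ k, ∑ i, L k i)) *
            ((∑ j, ∑ i, L j i) / n) / 2) *
          ∑ i, ((n : ℝ) * (∑ j, ((C j).card : ℝ) * L j i) /
              (∑ j, ∑ i', ((C j).card : ℝ) * L j i')) * ‖h i‖ ^ 2 := by
  intro x h
  set S : ℝ := ∑ j, ∑ i, L j i with hSdef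
  set T : ℝ := ∑ j, ∑ i, ((C j).card : ℝ) * L j i with hTdef
  have hS0 : S ≠ 0 := ne_of_gt hLsum
  have hT0 : T ≠ 0 := ne_of_gt hωLsum
  have hn0 : (n : ℝ) ≠ 0 := by
    rcases Nat.eq_zero_or_pos n with h0 | h0
    · exfalso
      subst h0
      simp [hSdef] at hLsum
      -- sums over Fin 0 are empty
    · exact_mod_cast h0.ne'
  -- per-function bound
  have step1 : ∀ j, f j (x + h) ≤ f j x + fderiv ℝ (f j) x h
      + ((C j).card : ℝ) / 2 * ∑ i, L j i * ‖h i‖ ^ 2 := by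
    intro j
    have hb := per_function_bound (f j) (hconv j) (hdiff j) (C j) (hdep j) (L j)
      (hlip j) x h
    have hmap : fderiv ℝ (f j) x h = ∑ i ∈ C j, fderiv ℝ (f j) x (Pi.single i (h i)) := by
      have h1 : fderiv ℝ (f j) x h = ∑ i, fderiv ℝ (f j) x (Pi.single i (h i)) := by
        conv_lhs => rw [← Finset.univ_sum_single h]
        rw [map_sum]
      rw [h1]
      exact (Finset.sum_subset (Finset.subset_univ _)
        (fun i _ hi => off_support_zero (f j) (hdiff j) (C j) (hdep j) x i hi (h i))).symm
    have hsumL : ∑ i ∈ C j, L j i * ‖h i‖ ^ 2 = ∑ i, L j i * ‖h i‖ ^ 2 :=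
      Finset.sum_subset (Finset.subset_univ _)
        (fun i _ hi => by rw [hL0 j i hi, zero_mul])
    rw [hmap, ← hsumL]
    exact hb
  have step2 : (∑ j, f j (x + h)) ≤ (∑ j, f j x) + (∑ j, fderiv ℝ (f j) x h)
      + ∑ j, ((C j).card : ℝ) / 2 * ∑ i, L j i * ‖h i‖ ^ 2 := by
    calc (∑ j, f j (x + h)) ≤ ∑ j, (f j x + fderiv ℝ (f j) x h
        + ((C j).card : ℝ) / 2 * ∑ i, L j i * ‖h i‖ ^ 2) :=
          Finset.sum_le_sum (fun j _ => step1 j)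
      _ = _ := by rw [Finset.sum_add_distrib, Finset.sum_add_distrib]
  have hfd : fderiv ℝ (fun y => ∑ j, f j y) x h = ∑ j, fderiv ℝ (f j) x h := by
    rw [fderiv_fun_sum (fun j _ => (hdiff j).differentiableAt)]
    simp
  -- arithmetic: quadratic terms coincide
  have harith : ((∑ j, ((C j).card : ℝ) * (∑ i, L j i) / S) * (S / n) / 2) *
      ∑ i, ((n : ℝ) * (∑ j, ((C j).card : ℝ) * L j i) / T) * ‖h i‖ ^ 2
      = ∑ j, ((C j).card : ℝ) / 2 * ∑ i, L j i * ‖h i‖ ^ 2 :=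
    arith_lemma m n (fun j => ((C j).card : ℝ)) L (fun i => ‖h i‖ ^ 2) hS0 hT0 hn0
  calc (∑ j, f j (x + h)) ≤ (∑ j, f j x) + (∑ j, fderiv ℝ (f j) x h)
      + ∑ j, ((C j).card : ℝ) / 2 * ∑ i, L j i * ‖h i‖ ^ 2 := step2
    _ = _ := by rw [hfd, harith]
end

section
/- Consider two coupled recursions in ℝ^N driven by the same random sets S_k and the same step vectors: (A) y_k = (1−θ_k)x_k + θ_k z_k, z_{k+1} updates blocks i ∈ S_k of z_k by a proximal step at y_k, x_{k+1} = y_k + (n/τ)θ_k(z_{k+1} − z_k); (B) u₀ = 0, z̃₀ = x₀, and for i ∈ S_k: z̃_{k+1}^{(i)} = z̃_k^{(i)} + t_k^{(i)}, u_{k+1}^{(i)} = u_k^{(i)} − ((1 − (n/τ)θ_k)/θ_k²) t_k^{(i)}, where t_k^{(i)} is the same proximal step evaluated at θ_k² u_k + z̃_k. If θ₀ = τ/n and (1−θ_{k+1})/θ_{k+1}² = 1/θ_k², then for all k: z_k = z̃_k, y_k = θ_k² u_k + z̃_k, and x_k = θ_{k−1}² u_k + z̃_k for k ≥ 1 (x₀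 = z̃₀). -/
theorem approx_implementations_equivalent (n τ : ℝ) (hn : 0 < n) (hτ : 0 < τ) (hτn : τ ≤ n)
    (d : ℕ) (Nb : Fin d → ℕ)
    (θ : ℕ → ℝ) (hθpos : ∀ k, 0 < θ k)
    (hθ0 : θ 0 = τ / n)
    (hθid : ∀ k, (1 - θ (k + 1)) / (θ (k + 1)) ^ 2 = 1 / (θ k) ^ 2)
    -- the random sets of blocks selected at each iteration
    (S : ℕ → Finset (Fin d))
    -- `P i k y zi` is the proximal step for block `i` at iteration `k`, evaluated at the
    -- point `y` with center block `zi` (e.g. the argmin of the proximal subproblem)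
    (P : (i : Fin d) → ℕ → (∀ i' : Fin d, Fin (Nb i') → ℝ) → (Fin (Nb i) → ℝ) → (Fin (Nb i) → ℝ))
    -- Recursion (A): Algorithm 1
    (x y z : ℕ → ∀ i : Fin d, Fin (Nb i) → ℝ)
    (hx0 : x 0 = z 0)
    (hy : ∀ k, y k = (1 - θ k) • x k + θ k • z k)
    (hz : ∀ k i, z (k + 1) i = if i ∈ S k then z k i + P i k (y k) (z k i) else z k i)
    (hx : ∀ k, x (k + 1) = y k + ((n / τ) * θ k) • (z (k + 1) - z k))
    -- Recursion (B): Algorithm 2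
    (u zt : ℕ → ∀ i : Fin d, Fin (Nb i) → ℝ)
    (hu0 : u 0 = 0) (hzt0 : zt 0 = x 0)
    (hzt : ∀ k i, zt (k + 1) i =
      if i ∈ S k then zt k i + P i k ((θ k) ^ 2 • u k + zt k) (zt k i) else zt k i)
    (hu : ∀ k i, u (k + 1) i =
      if i ∈ S k then
        u k i - ((1 - (n / τ) * θ k) / (θ k) ^ 2) • P i k ((θ k) ^ 2 • u k + zt k) (zt k i)
      else u k i) :
    ∀ k : ℕ, z k = zt k ∧ y k = (θ k) ^ 2 • u k + zt k ∧
      (1 ≤ k → x k = (θ (k - 1)) ^ 2 • u k + zt k) := by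

  intro k
  induction k with
  | zero =>
    have hz0 : z 0 = zt 0 := (hzt0.trans hx0).symm
    refine ⟨hz0, ?_, by omega⟩
    rw [hy 0, hx0, hu0, hz0]
    funext i j
    simp only [Pi.add_apply, Pi.smul_apply, Pi.zero_apply, smul_eq_mul]
    ring
  | succ k ih =>
    obtain ⟨ihz, ihy, _⟩ := ih
    have hθk := (hθpos k).ne'
    have hθk1 := (hθpos (k + 1)).ne'
    have hz' : z (k + 1) = zt (k + 1) := by
      funext i
      rw [hz k i, hzt k i, ihz, ihy]
    have hx' : x (k + 1) = (θ k) ^ 2 • u (k + 1) + zt (k + 1) := by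
      funext i j
      have h1 := congrFun (congrFun (hx k) i) j
      simp only [Pi.add_apply, Pi.smul_apply, Pi.sub_apply, smul_eq_mul] at h1
      rw [h1]
      simp only [Pi.add_apply, Pi.smul_apply, smul_eq_mul]
      rw [hz k i, hzt k i, hu k i, ihz, ihy]
      by_cases hi : i ∈ S k <;>
        simp only [hi, if_true, if_false, Pi.add_apply, Pi.smul_apply, Pi.sub_apply,
          smul_eq_mul]
      · field_simp
        ring
      · ring
    have hy' : y (k + 1) = (θ (k + 1)) ^ 2 • u (k + 1) + zt (k + 1) := by
      have key : (1 - θ (k + 1)) * (θ k) ^ 2 = (θ (k + 1)) ^ 2 := by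
        have := hθid k
        field_simp at this
        linarith [this]
      rw [hy (k + 1), hx', hz']
      funext i j
      simp only [Pi.add_apply, Pi.smul_apply, smul_eq_mul]
      linear_combination (u (k + 1) i j) * key
    exact ⟨hz', hy', fun _ => by simpa using hx'⟩
end
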